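/- Let λ > 0 and λ_n = −i·(n(g + n²)·tanh(hn))^{1/2}. For every ε > 0, the function p ↦ ∑_{n ∈ ℕ*, n ≠ p} 1/(λ_n − λ_p + λ) satisfies | ∑_{n ≠ p} 1/(λ_n − λ_p + λ) | ≤ C·log(p)·p^{−1/2} for p ≥ 2, for some C depending only on g, h, λ. -/

import Mathlib

open Finset


lemma tanh_pos' {x : ℝ} (hx : 0 < x) : 0 < Real.tanh x := by
  rw [Real.tanh_eq_sinh_div_cosh]
  exact div_pos (Real.sinh_pos_iff.2 hx) (Real.cosh_pos x)

lemma tanh_le_one' (x : ℝ) : Real.tanh x ≤ 1 := by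
  rw [Real.tanh_eq_sinh_div_cosh, div_le_one (Real.cosh_pos x)]
  nlinarith [Real.cosh_sub_sinh x, Real.exp_pos (-x)]

lemma tanh_mono' {x y : ℝ} (hxy : x ≤ y) : Real.tanh x ≤ Real.tanh y := by
  rw [Real.tanh_eq_sinh_div_cosh, Real.tanh_eq_sinh_div_cosh,
    div_le_div_iff₀ (Real.cosh_pos x) (Real.cosh_pos y)]
  have h1 : 0 ≤ Real.sinh (y - x) := Real.sinh_nonneg_iff.2 (by linarith)
  rw [Real.sinh_sub] at h1
  nlinarith

lemma f_upper (g h : ℝ) (hg : 0 < g) (hh : 0 < h) (k : ℕ) (hk : 1 ≤ k) :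
    Real.sqrt ((k:ℝ) * (g + (k:ℝ)^2) * Real.tanh (h * k)) ≤
      Real.sqrt (1 + g) * ((k:ℝ) * Real.sqrt k) := by
  have hk1 : (1:ℝ) ≤ (k:ℝ) := by exact_mod_cast hk
  have hsk : Real.sqrt (k:ℝ) ^ 2 = (k:ℝ) := Real.sq_sqrt (by linarith)
  have hgk : 0 ≤ g * ((k:ℝ) * ((k:ℝ)^2 - 1)) :=
    mul_nonneg hg.le (mul_nonneg (by linarith) (by nlinarith))
  have hb : (k:ℝ) * (g + (k:ℝ)^2) ≤ (1+g) * (k:ℝ)^3 := by nlinarith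
  have h1 : (k:ℝ) * (g + (k:ℝ)^2) * Real.tanh (h * k) ≤ (1 + g) * ((k:ℝ) * Real.sqrt k)^2 := by
    have ht := tanh_le_one' (h * k)
    have ht0 : 0 < Real.tanh (h * k) := tanh_pos' (by positivity)
    calc (k:ℝ) * (g + (k:ℝ)^2) * Real.tanh (h * k) ≤ (k:ℝ) * (g + (k:ℝ)^2) * 1 :=
          mul_le_mul_of_nonneg_left ht (by positivity)
      _ ≤ (1 + g) * ((k:ℝ) * Real.sqrt k)^2 := by
          rw [mul_one, mul_pow, hsk]; nlinarith
  calc Real.sqrt ((k:ℝ) * (g + (k:ℝ)^2) * Real.tanh (h * k))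
      ≤ Real.sqrt ((1 + g) * ((k:ℝ) * Real.sqrt k)^2) := Real.sqrt_le_sqrt h1
    _ = Real.sqrt (1 + g) * ((k:ℝ) * Real.sqrt k) := by
        rw [Real.sqrt_mul (by linarith), Real.sqrt_sq (by positivity)]

set_option maxHeartbeats 1000000 in
lemma f_gap (g h : ℝ) (hg : 0 < g) (hh : 0 < h) (p n : ℕ) (hp : 1 ≤ p) (hpn : p < n) :
    Real.tanh h / Real.sqrt (1 + g) * (Real.sqrt n * ((n:ℝ) - p)) ≤
      Real.sqrt ((n:ℝ) * (g + (n:ℝ)^2) * Real.tanh (h * n)) -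
      Real.sqrt ((p:ℝ) * (g + (p:ℝ)^2) * Real.tanh (h * p)) := by
  have hp1 : (1:ℝ) ≤ (p:ℝ) := by exact_mod_cast hp
  have hn1 : (1:ℝ) ≤ (n:ℝ) := by exact_mod_cast hpn.le.trans' hp
  have hpn' : (p:ℝ) < (n:ℝ) := by exact_mod_cast hpn
  set Fn := (n:ℝ) * (g + (n:ℝ)^2) * Real.tanh (h * n) with hFn
  set Fp := (p:ℝ) * (g + (p:ℝ)^2) * Real.tanh (h * p) with hFp
  have htn : 0 < Real.tanh (h * n) := tanh_pos' (by positivity)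
  have htp : 0 < Real.tanh (h * p) := tanh_pos' (by positivity)
  have hth : 0 < Real.tanh h := tanh_pos' hh
  have htpn : Real.tanh (h * p) ≤ Real.tanh (h * n) := tanh_mono' (by nlinarith)
  have hthp : Real.tanh h ≤ Real.tanh (h * p) := tanh_mono' (by nlinarith)
  have hFn0 : 0 < Fn := by positivity
  have hFp0 : 0 < Fp := by positivity
  have hcube0 : (0:ℝ) < (n:ℝ)^3 - (p:ℝ)^3 := by
    have := pow_lt_pow_left₀ hpn' (by linarith : (0:ℝ) ≤ (p:ℝ)) (by norm_num : 3 ≠ 0)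
    linarith
  -- step 1 : Fn - Fp ≥ tanh h * (n^3 - p^3)
  have step1 : Real.tanh h * ((n:ℝ)^3 - (p:ℝ)^3) ≤ Fn - Fp := by
    have hAn : (0:ℝ) ≤ (n:ℝ) * (g + (n:ℝ)^2) := by positivity
    have e0 : (n:ℝ) * (g + (n:ℝ)^2) * Real.tanh (h*p) ≤ (n:ℝ) * (g + (n:ℝ)^2) * Real.tanh (h*n) :=
      mul_le_mul_of_nonneg_left htpn hAn
    have d1 : ((n:ℝ)^3 - (p:ℝ)^3) ≤ (n:ℝ) * (g + (n:ℝ)^2) - (p:ℝ) * (g + (p:ℝ)^2) := by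
      have : 0 ≤ g * ((n:ℝ) - (p:ℝ)) := mul_nonneg hg.le (by linarith)
      nlinarith
    have d2 : Real.tanh h * ((n:ℝ)^3 - (p:ℝ)^3) ≤ Real.tanh (h*p) * ((n:ℝ)^3 - (p:ℝ)^3) :=
      mul_le_mul_of_nonneg_right hthp hcube0.le
    have d3 : Real.tanh (h*p) * ((n:ℝ)^3 - (p:ℝ)^3) ≤
        Real.tanh (h*p) * ((n:ℝ) * (g + (n:ℝ)^2) - (p:ℝ) * (g + (p:ℝ)^2)) :=
      mul_le_mul_of_nonneg_left d1 htp.le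
    rw [hFn, hFp]
    nlinarith [d2, d3, e0]
  set an := Real.sqrt (n:ℝ) with han
  set ap := Real.sqrt (p:ℝ) with hap
  have han2 : an ^ 2 = (n:ℝ) := Real.sq_sqrt (by linarith)
  have hap2 : ap ^ 2 = (p:ℝ) := Real.sq_sqrt (by linarith)
  have han0 : 0 < an := Real.sqrt_pos.2 (by linarith)
  have hap0 : 0 < ap := Real.sqrt_pos.2 (by linarith)
  have hapan : ap ≤ an := Real.sqrt_le_sqrt (by linarith)
  set S := (n:ℝ) * an + (p:ℝ) * ap with hS
  have hs : 0 < S := by positivity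
  have step2 : Real.sqrt Fn + Real.sqrt Fp ≤ Real.sqrt (1+g) * S := by
    have u1 := f_upper g h hg hh n (by omega)
    have u2 := f_upper g h hg hh p hp
    rw [← hFn, ← han] at u1
    rw [← hFp, ← hap] at u2
    rw [hS, mul_add]
    linarith
  have hsg : 0 < Real.sqrt (1+g) := Real.sqrt_pos.2 (by linarith)
  have cube : (n:ℝ)^3 - (p:ℝ)^3 = ((n:ℝ)*an - (p:ℝ)*ap) * S := by
    rw [hS]; nlinarith [han2, hap2]
  have lower : an * ((n:ℝ) - (p:ℝ)) ≤ (n:ℝ)*an - (p:ℝ)*ap := by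
    have := mul_le_mul_of_nonneg_left hapan (by linarith : (0:ℝ) ≤ (p:ℝ))
    nlinarith
  have hFpn : Fp ≤ Fn := by nlinarith [step1, mul_pos hth hcube0]
  have hd0 : 0 ≤ Real.sqrt Fn - Real.sqrt Fp := sub_nonneg.2 (Real.sqrt_le_sqrt hFpn)
  have hdiff : (Real.sqrt Fn - Real.sqrt Fp) * (Real.sqrt Fn + Real.sqrt Fp) = Fn - Fp := by
    have e1 : Real.sqrt Fn ^ 2 = Fn := Real.sq_sqrt hFn0.le
    have e2 : Real.sqrt Fp ^ 2 = Fp := Real.sq_sqrt hFp0.le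
    linear_combination e1 - e2
  have c1 : Real.tanh h * (an * ((n:ℝ) - p)) * S ≤ Real.tanh h * ((n:ℝ)^3 - (p:ℝ)^3) :=
    calc Real.tanh h * (an * ((n:ℝ) - p)) * S = Real.tanh h * ((an * ((n:ℝ) - p)) * S) := by ring
      _ ≤ Real.tanh h * (((n:ℝ)*an - (p:ℝ)*ap) * S) :=
          mul_le_mul_of_nonneg_left (mul_le_mul_of_nonneg_right lower hs.le) hth.le
      _ = Real.tanh h * ((n:ℝ)^3 - (p:ℝ)^3) := by rw [← cube]
  have c2 : Fn - Fp ≤ (Real.sqrt Fn - Real.sqrt Fp) * Real.sqrt (1+g) * S := by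
    calc Fn - Fp = (Real.sqrt Fn - Real.sqrt Fp) * (Real.sqrt Fn + Real.sqrt Fp) := hdiff.symm
      _ ≤ (Real.sqrt Fn - Real.sqrt Fp) * (Real.sqrt (1+g) * S) :=
          mul_le_mul_of_nonneg_left step2 hd0
      _ = (Real.sqrt Fn - Real.sqrt Fp) * Real.sqrt (1+g) * S := by ring
  rw [div_mul_eq_mul_div, div_le_iff₀ hsg]
  refine le_of_mul_le_mul_right ?_ hs
  calc Real.tanh h * (an * ((n:ℝ) - p)) * S ≤ Real.tanh h * ((n:ℝ)^3 - (p:ℝ)^3) := c1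
    _ ≤ Fn - Fp := step1
    _ ≤ (Real.sqrt Fn - Real.sqrt Fp) * Real.sqrt (1+g) * S := c2

lemma term_bound (g h lam0 : ℝ) (hg : 0 < g) (hh : 0 < h) (hlam0 : 0 < lam0)
    (p n : ℕ) (hp : 1 ≤ p) (hn : 1 ≤ n) (hne : n ≠ p) :
    ‖((-Complex.I * (Real.sqrt ((n:ℝ) * (g + (n:ℝ)^2) * Real.tanh (h * n)) : ℝ)) -
      (-Complex.I * (Real.sqrt ((p:ℝ) * (g + (p:ℝ)^2) * Real.tanh (h * p)) : ℝ)) + (lam0:ℂ))⁻¹‖ ≤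
    (Real.sqrt (1+g) / Real.tanh h) * (Real.sqrt (max n p : ℕ) * |(n:ℝ) - p|)⁻¹ := by
  have hth : 0 < Real.tanh h := tanh_pos' hh
  have hsg : 0 < Real.sqrt (1+g) := Real.sqrt_pos.2 (by linarith)
  set c := Real.tanh h / Real.sqrt (1+g) with hc
  have hc0 : 0 < c := div_pos hth hsg
  set fn := Real.sqrt ((n:ℝ) * (g + (n:ℝ)^2) * Real.tanh (h * n)) with hfn
  set fp := Real.sqrt ((p:ℝ) * (g + (p:ℝ)^2) * Real.tanh (h * p)) with hfp
  set z := (-Complex.I * (fn:ℂ)) - (-Complex.I * (fp:ℂ)) + (lam0:ℂ) with hz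
  have him : z.im = fp - fn := by
    simp [hz, Complex.add_im, Complex.sub_im, Complex.mul_im]; ring
  set X := Real.sqrt (max n p : ℕ) * |(n:ℝ) - p| with hX
  have hnep : (n:ℝ) ≠ (p:ℝ) := by exact_mod_cast hne
  have hX0 : 0 < X := by
    apply mul_pos
    · apply Real.sqrt_pos.2
      have : 1 ≤ max n p := le_trans hp (le_max_right n p)
      exact_mod_cast this
    · exact abs_pos.2 (sub_ne_zero.2 hnep)
  have hmax : c * X ≤ |z.im| := by
    rw [him]
    rcases lt_or_gt_of_ne hne with hlt | hgt
    · -- n < p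
      have hg1 := f_gap g h hg hh n p hn hlt
      have hm : (max n p) = p := Nat.max_eq_right hlt.le
      have habs : |(n:ℝ) - p| = (p:ℝ) - n := by
        rw [abs_of_neg (by exact_mod_cast sub_neg.2 (by exact_mod_cast hlt : (n:ℝ) < p))]; ring
      rw [hX, hm, habs]
      calc c * (Real.sqrt p * ((p:ℝ) - n)) ≤ fp - fn := hg1
        _ ≤ |fp - fn| := le_abs_self _
    · -- p < n
      have hg1 := f_gap g h hg hh p n hp hgt
      have hm : (max n p) = n := Nat.max_eq_left hgt.le
      have habs : |(n:ℝ) - p| = (n:ℝ) - p := abs_of_pos (by exact_mod_cast sub_pos.2 (by exact_mod_cast hgt : (p:ℝ) < n))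
      rw [hX, hm, habs]
      calc c * (Real.sqrt n * ((n:ℝ) - p)) ≤ fn - fp := hg1
        _ ≤ |fp - fn| := by rw [abs_sub_comm]; exact le_abs_self _
  have habsz : c * X ≤ ‖z‖ := le_trans hmax (Complex.abs_im_le_norm z)
  rw [norm_inv]
  calc ‖z‖⁻¹ ≤ (c * X)⁻¹ := by
        apply inv_anti₀ (mul_pos hc0 hX0) habsz
    _ = (Real.sqrt (1+g) / Real.tanh h) * X⁻¹ := by
        rw [mul_inv, hc, inv_div]


lemma harmonic_le' (m : ℕ) : ∑ k ∈ range m, ((k : ℝ) + 1)⁻¹ ≤ 1 + Real.log m := by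
  induction m with
  | zero => simp
  | succ m ih =>
    rcases Nat.eq_zero_or_pos m with hm | hm
    · subst hm; simp
    · rw [Finset.sum_range_succ]
      have hm' : (0:ℝ) < m := by exact_mod_cast hm
      have key : Real.log m + ((m:ℝ) + 1)⁻¹ ≤ Real.log (m + 1) := by
        have h1 : Real.log ((m:ℝ)/(m+1)) ≤ (m:ℝ)/(m+1) - 1 :=
          Real.log_le_sub_one_of_pos (by positivity)
        rw [Real.log_div (by positivity) (by positivity)] at h1
        have h2 : (m:ℝ)/(m+1) - 1 = -((m:ℝ)+1)⁻¹ := by field_simp; ring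
        rw [h2] at h1
        linarith
      push_cast
      push_cast at ih
      linarith

lemma tail_sum' (M : ℕ) (hM : 1 ≤ M) : ∀ N, M ≤ N →
    ∑ n ∈ Ioc M N, ((n : ℝ) * Real.sqrt n)⁻¹ ≤ 2 / Real.sqrt M - 2 / Real.sqrt N := by
  intro N
  induction N with
  | zero => intro h; omega
  | succ N ih =>
    intro hMN
    rcases Nat.lt_or_ge M (N+1) with hlt | hge
    · have hMN' : M ≤ N := by omega
      have hN1 : (1:ℝ) ≤ N := by exact_mod_cast (by omega : 1 ≤ N)
      rw [Finset.sum_Ioc_succ_top hMN']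
      have step : (((N:ℝ)+1) * Real.sqrt ((N:ℝ)+1))⁻¹ ≤
          2 / Real.sqrt N - 2 / Real.sqrt ((N:ℝ)+1) := by
        have hb : Real.sqrt ((N:ℝ)+1) > 0 := Real.sqrt_pos.2 (by linarith)
        have ha : Real.sqrt (N:ℝ) > 0 := Real.sqrt_pos.2 (by linarith)
        have hab : Real.sqrt (N:ℝ) ≤ Real.sqrt ((N:ℝ)+1) := Real.sqrt_le_sqrt (by linarith)
        have ha2 : Real.sqrt (N:ℝ) ^ 2 = (N:ℝ) := Real.sq_sqrt (by linarith)
        have hb2 : Real.sqrt ((N:ℝ)+1) ^ 2 = (N:ℝ)+1 := Real.sq_sqrt (by linarith)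
        rw [div_sub_div _ _ (ne_of_gt ha) (ne_of_gt hb), le_div_iff₀ (by positivity),
          inv_mul_eq_div, div_le_iff₀ (by positivity)]
        nlinarith [mul_pos ha hb, sq_nonneg (Real.sqrt ((N:ℝ)+1) - Real.sqrt (N:ℝ))]
      have ihh := ih hMN'
      have hcast : ((N+1 : ℕ) : ℝ) = (N:ℝ) + 1 := by push_cast; ring
      rw [hcast]
      linarith
    · have : M = N + 1 := by omega
      subst this
      simp

set_option maxHeartbeats 1000000 in
lemma sum_est (K : ℝ) (hK : 0 ≤ K) (p N : ℕ) (hp : 2 ≤ p) :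
    ∑ n ∈ Finset.range N, (if n = 0 ∨ n = p then (0:ℝ)
        else K * (Real.sqrt (max n p : ℕ) * |(n:ℝ) - (p:ℝ)|)⁻¹)
      ≤ K * ((6 + 2 * Real.log p) * (Real.sqrt p)⁻¹) := by
  have hp1 : (1:ℝ) ≤ (p:ℝ) := by exact_mod_cast (by omega : 1 ≤ p)
  have hsp : 0 < Real.sqrt p := Real.sqrt_pos.2 (by linarith)
  set sp := Real.sqrt p with hsp'
  set t1 : ℕ → ℝ := fun n => if n < p then K * (sp⁻¹ * ((p:ℝ) - n)⁻¹) else 0 with ht1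
  set t2 : ℕ → ℝ := fun n => if p < n ∧ n ≤ 2*p then K * (sp⁻¹ * ((n:ℝ) - p)⁻¹) else 0 with ht2
  set t3 : ℕ → ℝ := fun n => if 2*p < n then 2*K * ((n:ℝ) * Real.sqrt n)⁻¹ else 0 with ht3
  have ht1n : ∀ n, 0 ≤ t1 n := by
    intro n; rw [ht1]; dsimp only; split
    · have : (n:ℝ) < p := by exact_mod_cast ‹n < p›
      have : (0:ℝ) < (p:ℝ) - n := by linarith
      positivity
    · exact le_refl 0
  have ht2n : ∀ n, 0 ≤ t2 n := by
    intro n; rw [ht2]; dsimp only; split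
    · rename_i hcond
      have : (p:ℝ) < n := by exact_mod_cast hcond.1
      have : (0:ℝ) < (n:ℝ) - p := by linarith
      positivity
    · exact le_refl 0
  have ht3n : ∀ n, 0 ≤ t3 n := by
    intro n; rw [ht3]; dsimp only; split
    · rename_i hcond
      have h1 : (0:ℝ) < n := by
        have : 0 < n := by omega
        exact_mod_cast this
      positivity
    · exact le_refl 0
  -- pointwise bound
  have hpoint : ∀ n, (if n = 0 ∨ n = p then (0:ℝ)
      else K * (Real.sqrt (max n p : ℕ) * |(n:ℝ) - (p:ℝ)|)⁻¹) ≤ t1 n + t2 n + t3 n := by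
    intro n
    by_cases h0 : n = 0 ∨ n = p
    · rw [if_pos h0]
      have := ht1n n; have := ht2n n; have := ht3n n
      linarith
    · rw [if_neg h0]
      push_neg at h0
      obtain ⟨hn0, hnp⟩ := h0
      have hn1 : (1:ℝ) ≤ (n:ℝ) := by exact_mod_cast (by omega : 1 ≤ n)
      rcases lt_trichotomy n p with hlt | heq | hgt
      · -- n < p : equality with t1
        have hm : max n p = p := Nat.max_eq_right hlt.le
        have hnr : (n:ℝ) < p := by exact_mod_cast hlt
        have habs : |(n:ℝ) - p| = (p:ℝ) - n := by rw [abs_of_neg (by linarith)]; ring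
        have e1 : t1 n = K * (sp⁻¹ * ((p:ℝ) - n)⁻¹) := by rw [ht1]; exact if_pos hlt
        have e2 : t2 n = 0 := by rw [ht2]; exact if_neg (by omega)
        have e3 : t3 n = 0 := by rw [ht3]; exact if_neg (by omega)
        rw [hm, habs, e1, e2, e3, mul_inv]
        simp [hsp']
      · exact absurd heq hnp
      · -- p < n
        have hm : max n p = n := Nat.max_eq_left hgt.le
        have hpr : (p:ℝ) < n := by exact_mod_cast hgt
        have habs : |(n:ℝ) - p| = (n:ℝ) - p := abs_of_pos (by linarith)
        rw [hm, habs]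
        have e1 : t1 n = 0 := by rw [ht1]; exact if_neg (by omega)
        rcases Nat.lt_or_ge (2*p) n with h2p | h2p
        · -- n > 2p : use t3
          have e2 : t2 n = 0 := by rw [ht2]; exact if_neg (by omega)
          have e3 : t3 n = 2*K * ((n:ℝ) * Real.sqrt n)⁻¹ := by rw [ht3]; exact if_pos h2p
          rw [e1, e2, e3]
          have h2pr : 2*(p:ℝ) < n := by exact_mod_cast h2p
          have hsn : 0 < Real.sqrt n := Real.sqrt_pos.2 (by linarith)
          have hn0' : (0:ℝ) < n := by linarith
          have hle : (n:ℝ) * Real.sqrt n / 2 ≤ Real.sqrt n * ((n:ℝ) - p) := by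
            nlinarith [mul_le_mul_of_nonneg_left (show (n:ℝ)/2 ≤ (n:ℝ) - p by linarith) hsn.le]
          have key : (Real.sqrt n * ((n:ℝ) - p))⁻¹ ≤ 2 * ((n:ℝ) * Real.sqrt n)⁻¹ := by
            calc (Real.sqrt n * ((n:ℝ) - p))⁻¹ ≤ ((n:ℝ) * Real.sqrt n / 2)⁻¹ :=
                  inv_anti₀ (by positivity) hle
              _ = 2 * ((n:ℝ) * Real.sqrt n)⁻¹ := by rw [inv_div, div_eq_mul_inv]
          calc K * (Real.sqrt n * ((n:ℝ) - p))⁻¹ ≤ K * (2 * ((n:ℝ) * Real.sqrt n)⁻¹) :=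
                mul_le_mul_of_nonneg_left key hK
            _ = 2*K * ((n:ℝ) * Real.sqrt n)⁻¹ + 0 + 0 := by ring
            _ = 0 + 0 + 2*K * ((n:ℝ) * Real.sqrt n)⁻¹ := by ring
        · -- p < n ≤ 2p : use t2
          have e2 : t2 n = K * (sp⁻¹ * ((n:ℝ) - p)⁻¹) := by rw [ht2]; exact if_pos ⟨hgt, h2p⟩
          have e3 : t3 n = 0 := by rw [ht3]; exact if_neg (by omega)
          rw [e1, e2, e3]
          have hspn : sp ≤ Real.sqrt n := Real.sqrt_le_sqrt (by exact_mod_cast hgt.le)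
          have key : (Real.sqrt n * ((n:ℝ) - p))⁻¹ ≤ sp⁻¹ * ((n:ℝ) - p)⁻¹ := by
            rw [← mul_inv]
            apply inv_anti₀ (mul_pos hsp (by linarith : (0:ℝ) < (n:ℝ) - p))
            apply mul_le_mul_of_nonneg_right hspn (by linarith)
          calc K * (Real.sqrt n * ((n:ℝ) - p))⁻¹ ≤ K * (sp⁻¹ * ((n:ℝ) - p)⁻¹) :=
                mul_le_mul_of_nonneg_left key hK
            _ = 0 + K * (sp⁻¹ * ((n:ℝ) - p)⁻¹) + 0 := by ring
  have hsplit : ∑ n ∈ range N, (if n = 0 ∨ n = p then (0:ℝ)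
      else K * (Real.sqrt (max n p : ℕ) * |(n:ℝ) - (p:ℝ)|)⁻¹)
      ≤ (∑ n ∈ range N, t1 n) + (∑ n ∈ range N, t2 n) + (∑ n ∈ range N, t3 n) := by
    rw [← Finset.sum_add_distrib, ← Finset.sum_add_distrib]
    exact Finset.sum_le_sum (fun n _ => hpoint n)
  -- bound S1
  have hS1 : ∑ n ∈ range N, t1 n ≤ K * sp⁻¹ * (1 + Real.log p) := by
    have step : ∑ n ∈ range N, t1 n ≤ ∑ n ∈ range p, K * (sp⁻¹ * ((p:ℝ) - n)⁻¹) := by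
      rw [ht1]
      dsimp only
      rw [Finset.sum_ite, Finset.sum_const_zero, add_zero]
      apply Finset.sum_le_sum_of_subset_of_nonneg
      · intro x hx
        simp only [Finset.mem_filter, Finset.mem_range] at hx ⊢
        exact hx.2
      · intro i hi _
        simp only [Finset.mem_range] at hi
        have : (i:ℝ) < p := by exact_mod_cast hi
        have : (0:ℝ) < (p:ℝ) - i := by linarith
        positivity
    have reflect : ∑ n ∈ range p, ((p:ℝ) - n)⁻¹ = ∑ j ∈ range p, ((j:ℝ) + 1)⁻¹ := by
      rw [← Finset.sum_range_reflect (fun n => ((p:ℝ) - n)⁻¹) p]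
      apply Finset.sum_congr rfl
      intro j hj
      simp only [Finset.mem_range] at hj
      congr 1
      rw [Nat.cast_sub (by omega), Nat.cast_sub (by omega)]
      push_cast
      ring
    calc ∑ n ∈ range N, t1 n ≤ ∑ n ∈ range p, K * (sp⁻¹ * ((p:ℝ) - n)⁻¹) := step
      _ = K * sp⁻¹ * ∑ n ∈ range p, ((p:ℝ) - n)⁻¹ := by
          rw [Finset.mul_sum]; apply Finset.sum_congr rfl; intro n _; ring
      _ = K * sp⁻¹ * ∑ j ∈ range p, ((j:ℝ) + 1)⁻¹ := by rw [reflect]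
      _ ≤ K * sp⁻¹ * (1 + Real.log p) := by
          apply mul_le_mul_of_nonneg_left (harmonic_le' p) (by positivity)
  -- bound S2
  have hS2 : ∑ n ∈ range N, t2 n ≤ K * sp⁻¹ * (1 + Real.log p) := by
    have step : ∑ n ∈ range N, t2 n ≤ ∑ n ∈ Ioc p (2*p), K * (sp⁻¹ * ((n:ℝ) - p)⁻¹) := by
      rw [ht2]
      dsimp only
      rw [Finset.sum_ite, Finset.sum_const_zero, add_zero]
      apply Finset.sum_le_sum_of_subset_of_nonneg
      · intro x hx
        simp only [Finset.mem_filter, Finset.mem_range, Finset.mem_Ioc] at hx ⊢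
        exact hx.2
      · intro i hi _
        simp only [Finset.mem_Ioc] at hi
        have : (p:ℝ) < i := by exact_mod_cast hi.1
        have : (0:ℝ) < (i:ℝ) - p := by linarith
        positivity
    have hIoc : Ioc p (2*p) = Ico (p+1) (2*p+1) := by
      ext x; simp only [Finset.mem_Ioc, Finset.mem_Ico]; omega
    have reindex : ∑ n ∈ Ioc p (2*p), ((n:ℝ) - p)⁻¹ = ∑ j ∈ range p, ((j:ℝ) + 1)⁻¹ := by
      rw [hIoc, Finset.sum_Ico_eq_sum_range]
      have : 2*p+1 - (p+1) = p := by omega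
      rw [this]
      apply Finset.sum_congr rfl
      intro j _
      congr 1
      push_cast
      ring
    calc ∑ n ∈ range N, t2 n ≤ ∑ n ∈ Ioc p (2*p), K * (sp⁻¹ * ((n:ℝ) - p)⁻¹) := step
      _ = K * sp⁻¹ * ∑ n ∈ Ioc p (2*p), ((n:ℝ) - p)⁻¹ := by
          rw [Finset.mul_sum]; apply Finset.sum_congr rfl; intro n _; ring
      _ = K * sp⁻¹ * ∑ j ∈ range p, ((j:ℝ) + 1)⁻¹ := by rw [reindex]
      _ ≤ K * sp⁻¹ * (1 + Real.log p) := by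
          apply mul_le_mul_of_nonneg_left (harmonic_le' p) (by positivity)
  -- bound S3
  have hS3 : ∑ n ∈ range N, t3 n ≤ 4 * K * sp⁻¹ := by
    rcases Nat.lt_or_ge N (2*p+1) with hN | hN
    · have : ∑ n ∈ range N, t3 n = 0 := by
        apply Finset.sum_eq_zero
        intro n hn
        simp only [Finset.mem_range] at hn
        rw [ht3]
        exact if_neg (by omega)
      rw [this]
      positivity
    · have h2pN : 2*p ≤ N := by omega
      have step : ∑ n ∈ range N, t3 n ≤ ∑ n ∈ Ioc (2*p) N, 2*K * ((n:ℝ) * Real.sqrt n)⁻¹ := by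
        rw [ht3]
        dsimp only
        rw [Finset.sum_ite, Finset.sum_const_zero, add_zero]
        apply Finset.sum_le_sum_of_subset_of_nonneg
        · intro x hx
          simp only [Finset.mem_filter, Finset.mem_range, Finset.mem_Ioc] at hx ⊢
          omega
        · intro i hi _
          simp only [Finset.mem_Ioc] at hi
          have : (0:ℝ) < i := by exact_mod_cast (by omega : 0 < i)
          positivity
      have tail := tail_sum' (2*p) (by omega) N h2pN
      have hs2p : sp ≤ Real.sqrt ((2*p : ℕ) : ℝ) := Real.sqrt_le_sqrt (by push_cast; linarith)
      have hsN : 0 ≤ 2 / Real.sqrt N := by positivity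
      calc ∑ n ∈ range N, t3 n ≤ ∑ n ∈ Ioc (2*p) N, 2*K * ((n:ℝ) * Real.sqrt n)⁻¹ := step
        _ = 2*K * ∑ n ∈ Ioc (2*p) N, ((n:ℝ) * Real.sqrt n)⁻¹ := by rw [Finset.mul_sum]
        _ ≤ 2*K * (2 / Real.sqrt ((2*p:ℕ):ℝ) - 2 / Real.sqrt N) := by
            apply mul_le_mul_of_nonneg_left tail (by positivity)
        _ ≤ 2*K * (2 / sp) := by
            apply mul_le_mul_of_nonneg_left _ (by positivity)
            have : 2 / Real.sqrt ((2*p:ℕ):ℝ) ≤ 2 / sp :=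
              div_le_div_of_nonneg_left (by norm_num) hsp hs2p
            linarith
        _ = 4 * K * sp⁻¹ := by field_simp; ring
  calc ∑ n ∈ range N, (if n = 0 ∨ n = p then (0:ℝ)
        else K * (Real.sqrt (max n p : ℕ) * |(n:ℝ) - (p:ℝ)|)⁻¹)
      ≤ (∑ n ∈ range N, t1 n) + (∑ n ∈ range N, t2 n) + (∑ n ∈ range N, t3 n) := hsplit
    _ ≤ K * sp⁻¹ * (1 + Real.log p) + K * sp⁻¹ * (1 + Real.log p) + 4 * K * sp⁻¹ := by
        linarith
    _ = K * ((6 + 2 * Real.log p) * sp⁻¹) := by ring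


set_option maxHeartbeats 1000000 in
/-- |∑_{n ≠ p} 1/(λ_n − λ_p + λ)| ≤ C·log(p)·p^{−1/2} for p ≥ 2. -/
theorem stmt13 (g h : ℝ) (hg : 0 < g) (hh : 0 < h)
    (lam : ℕ → ℂ)
    (hlam : ∀ n : ℕ, lam n =
      -Complex.I * Real.sqrt ((n : ℝ) * (g + (n : ℝ) ^ 2) * Real.tanh (h * n)))
    (lam0 : ℝ) (hlam0 : 0 < lam0) :
    ∃ C : ℝ, 0 < C ∧ ∀ p : ℕ, 2 ≤ p →
      ‖(∑' n : ℕ, if n = 0 ∨ n = p then 0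
          else (lam n - lam p + (lam0 : ℂ))⁻¹)‖
        ≤ C * Real.log p * (p : ℝ) ^ (-(1 : ℝ) / 2) := by
  have hth : 0 < Real.tanh h := tanh_pos' hh
  set K := Real.sqrt (1+g) / Real.tanh h with hK
  have hK0 : 0 < K := div_pos (Real.sqrt_pos.2 (by linarith)) hth
  have hlog2 : 0 < Real.log 2 := Real.log_pos one_lt_two
  refine ⟨K * (2 + 6 / Real.log 2), by positivity, ?_⟩
  intro p hp
  have hp1R : (1:ℝ) ≤ (p:ℝ) := by exact_mod_cast (by omega : 1 ≤ p)
  have hlogp : Real.log 2 ≤ Real.log p :=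
    Real.log_le_log (by norm_num) (by exact_mod_cast hp)
  have hrpow : ((p:ℝ)) ^ (-(1 : ℝ) / 2) = (Real.sqrt p)⁻¹ := by
    rw [show (-(1:ℝ)/2) = -(1/2 : ℝ) by ring, Real.rpow_neg (by positivity),
      ← Real.sqrt_eq_rpow]
  have hsp : 0 < Real.sqrt p := Real.sqrt_pos.2 (by linarith)
  have hRHS : 0 ≤ K * (2 + 6 / Real.log 2) * Real.log p * (p:ℝ) ^ (-(1 : ℝ) / 2) := by
    rw [hrpow]
    have : 0 < Real.log p := lt_of_lt_of_le hlog2 hlogp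
    positivity
  by_cases hsum : Summable (fun n : ℕ => if n = 0 ∨ n = p then (0:ℂ)
      else (lam n - lam p + (lam0 : ℂ))⁻¹)
  · have hns : Summable (fun n : ℕ => ‖if n = 0 ∨ n = p then (0:ℂ)
        else (lam n - lam p + (lam0 : ℂ))⁻¹‖) := summable_norm_iff.mpr hsum
    have hfin : ∀ N : ℕ, ∑ n ∈ Finset.range N, ‖if n = 0 ∨ n = p then (0:ℂ)
        else (lam n - lam p + (lam0 : ℂ))⁻¹‖ ≤ K * ((6 + 2 * Real.log p) * (Real.sqrt p)⁻¹) := by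
      intro N
      calc ∑ n ∈ Finset.range N, ‖if n = 0 ∨ n = p then (0:ℂ)
            else (lam n - lam p + (lam0 : ℂ))⁻¹‖
          ≤ ∑ n ∈ Finset.range N, (if n = 0 ∨ n = p then (0:ℝ)
            else K * (Real.sqrt (max n p : ℕ) * |(n:ℝ) - (p:ℝ)|)⁻¹) := by
            apply Finset.sum_le_sum
            intro n _
            by_cases hcase : n = 0 ∨ n = p
            · simp [hcase]
            · rw [if_neg hcase, if_neg hcase, hlam n, hlam p]
              push_neg at hcase
              exact term_bound g h lam0 hg hh hlam0 p n (by omega) (by omega) hcase.2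
        _ ≤ K * ((6 + 2 * Real.log p) * (Real.sqrt p)⁻¹) := sum_est K hK0.le p N hp
    calc ‖(∑' n : ℕ, if n = 0 ∨ n = p then (0:ℂ)
          else (lam n - lam p + (lam0 : ℂ))⁻¹)‖
        = ‖∑' n : ℕ, if n = 0 ∨ n = p then (0:ℂ)
          else (lam n - lam p + (lam0 : ℂ))⁻¹‖ := rfl
      _ ≤ ∑' n : ℕ, ‖if n = 0 ∨ n = p then (0:ℂ)
          else (lam n - lam p + (lam0 : ℂ))⁻¹‖ := norm_tsum_le_tsum_norm hns
      _ ≤ K * ((6 + 2 * Real.log p) * (Real.sqrt p)⁻¹) :=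
          Summable.tsum_le_of_sum_range_le hns hfin
      _ ≤ K * (2 + 6 / Real.log 2) * Real.log p * (p:ℝ) ^ (-(1 : ℝ) / 2) := by
          rw [hrpow]
          have h6 : 6 + 2 * Real.log p ≤ (2 + 6 / Real.log 2) * Real.log p := by
            have h66 : (6:ℝ) = (6 / Real.log 2) * Real.log 2 := by field_simp
            have : (6 / Real.log 2) * Real.log 2 ≤ (6 / Real.log 2) * Real.log p :=
              mul_le_mul_of_nonneg_left hlogp (by positivity)
            nlinarith
          calc K * ((6 + 2 * Real.log p) * (Real.sqrt p)⁻¹)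
              ≤ K * (((2 + 6 / Real.log 2) * Real.log p) * (Real.sqrt p)⁻¹) := by
                apply mul_le_mul_of_nonneg_left _ hK0.le
                exact mul_le_mul_of_nonneg_right h6 (by positivity)
            _ = K * (2 + 6 / Real.log 2) * Real.log p * (Real.sqrt p)⁻¹ := by ring
  · rw [tsum_eq_zero_of_not_summable hsum]
    simpa using hRHS
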